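/- Every function of Φ-bounded variation on [a,b] has one-sided limits at every point (it has only simple discontinuities). -/

import Mathlib

open Finset Filter

lemma PhiBV_core (φ : ℕ → ℝ → ℝ)
    (hmono : ∀ j, MonotoneOn (φ j) (Set.Ici 0))
    (hdivg : ∀ x : ℝ, 0 < x →
      Tendsto (fun k => ∑ j ∈ range k, φ j x) atTop atTop)
    (a b : ℝ) (f : ℝ → ℝ) (V : ℝ)
    (hVf : ∀ (s : ℕ) (u v : Fin s → ℝ),
      (∀ j, a ≤ u j ∧ u j < v j ∧ v j ≤ b) →
      (∀ i j, i ≠ j → Set.Ioo (u i) (v i) ∩ Set.Ioo (u j) (v j) = ∅) →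
      ∑ j, φ j.1 |f (v j) - f (u j)| ≤ V)
    (x : ℝ) (hx : x ∈ Set.Ico a b) :
    ∃ L : ℝ, Tendsto f (nhdsWithin x (Set.Ioo x b)) (nhds L) := by
  have hax : a ≤ x := hx.1
  have hxb : x < b := hx.2
  haveI hne : (nhdsWithin x (Set.Ioo x b)).NeBot := by
    apply mem_closure_iff_nhdsWithin_neBot.mp
    rw [closure_Ioo hxb.ne]
    exact ⟨le_refl x, hxb.le⟩
  suffices h : Cauchy (Filter.map f (nhdsWithin x (Set.Ioo x b))) by
    obtain ⟨L, hL⟩ := CompleteSpace.complete h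
    exact ⟨L, hL⟩
  rw [Metric.cauchy_iff]
  refine ⟨Filter.map_neBot, ?_⟩
  intro ε hε
  by_contra hcon
  push_neg at hcon
  have claim : ∀ c, x < c → c ≤ b → ∃ u v, x < u ∧ u < v ∧ v < c ∧ ε ≤ |f v - f u| := by
    intro c hxc hcb
    have hs : Set.Ioo x c ∈ nhdsWithin x (Set.Ioo x b) := by
      rw [mem_nhdsWithin]
      refine ⟨Set.Iio c, isOpen_Iio, hxc, ?_⟩
      rintro y ⟨hy1, hy2, hy3⟩
      exact ⟨hy2, hy1⟩
    obtain ⟨p, hp, q, hq, hpq⟩ := hcon (f '' Set.Ioo x c) (image_mem_map hs)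
    obtain ⟨u, hu, rfl⟩ := hp
    obtain ⟨v, hv, rfl⟩ := hq
    rcases lt_trichotomy u v with h | h | h
    · exact ⟨u, v, hu.1, h, hv.2, by rwa [Real.dist_eq, abs_sub_comm] at hpq⟩
    · rw [h] at hpq; simp at hpq; linarith
    · exact ⟨v, u, hv.1, h, hu.2, by rwa [Real.dist_eq] at hpq⟩
  choose! U W hxU hUW hWc hfe using claim
  let c : ℕ → ℝ := fun n => n.rec b (fun _ p => U p)
  have hcs : ∀ n, c (n + 1) = U (c n) := fun n => rfl
  have hinv : ∀ n, x < c n ∧ c n ≤ b := by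
    intro n
    induction n with
    | zero => exact ⟨hxb, le_refl b⟩
    | succ n ih =>
      have h1 := hxU (c n) ih.1 ih.2
      have h2 := hUW (c n) ih.1 ih.2
      have h3 := hWc (c n) ih.1 ih.2
      rw [hcs]
      exact ⟨h1, by linarith [ih.2]⟩
  have hanti : StrictAnti c := by
    apply strictAnti_nat_of_succ_lt
    intro n
    have h2 := hUW (c n) (hinv n).1 (hinv n).2
    have h3 := hWc (c n) (hinv n).1 (hinv n).2
    rw [hcs]
    linarith
  have hsep : ∀ i j : ℕ, i < j → W (c j) ≤ U (c i) := by
    intro i j hij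
    have h1 : c j ≤ c (i + 1) := hanti.antitone hij
    have h3 := hWc (c j) (hinv j).1 (hinv j).2
    rw [hcs] at h1
    linarith
  have key : ∀ k, ∑ j ∈ range k, φ j ε ≤ V := by
    intro k
    have hmain := hVf k (fun j => U (c j)) (fun j => W (c j)) ?_ ?_
    · calc ∑ j ∈ range k, φ j ε = ∑ j : Fin k, φ j.1 ε :=
            (Fin.sum_univ_eq_sum_range (fun j => φ j ε) k).symm
        _ ≤ ∑ j : Fin k, φ j.1 |f (W (c j.1)) - f (U (c j.1))| := by
            apply Finset.sum_le_sum
            intro j _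
            exact hmono j.1 (Set.mem_Ici.mpr hε.le) (Set.mem_Ici.mpr (abs_nonneg _)) (hfe (c j.1) (hinv j.1).1 (hinv j.1).2)
        _ ≤ V := hmain
    · intro j
      have h1 := hxU (c j.1) (hinv j.1).1 (hinv j.1).2
      have h2 := hUW (c j.1) (hinv j.1).1 (hinv j.1).2
      have h3 := hWc (c j.1) (hinv j.1).1 (hinv j.1).2
      exact ⟨by linarith, h2, by linarith [(hinv j.1).2]⟩
    · intro i j hij
      rw [Set.eq_empty_iff_forall_notMem]
      rintro y ⟨⟨hy1, hy2⟩, ⟨hy3, hy4⟩⟩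
      rcases lt_or_gt_of_ne (fun h : (i : ℕ) = j => hij (Fin.ext h)) with h | h
      · have := hsep i.1 j.1 h; linarith
      · have := hsep j.1 i.1 h; linarith
  obtain ⟨k, hk⟩ := ((hdivg ε hε).eventually_ge_atTop (V + 1)).exists
  linarith [key k]

/-- Every function of `Φ`-bounded variation on `[a,b]` has one-sided limits at every point,
i.e. it has only simple discontinuities. -/
theorem PhiBV_one_sided_limits (φ : ℕ → ℝ → ℝ)
    (hmono : ∀ j, MonotoneOn (φ j) (Set.Ici 0))
    (hconv : ∀ j, ConvexOn ℝ (Set.Ici 0) (φ j))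
    (hzero : ∀ j, φ j 0 = 0)
    (hord : ∀ j, ∀ x : ℝ, 0 < x → 0 < φ (j + 1) x ∧ φ (j + 1) x ≤ φ j x)
    (hdivg : ∀ x : ℝ, 0 < x →
      Tendsto (fun k => ∑ j ∈ range k, φ j x) atTop atTop)
    (a b : ℝ) (hab : a ≤ b) (f : ℝ → ℝ) (V : ℝ)
    (hVf : ∀ (s : ℕ) (u v : Fin s → ℝ),
      (∀ j, a ≤ u j ∧ u j < v j ∧ v j ≤ b) →
      (∀ i j, i ≠ j → Set.Ioo (u i) (v i) ∩ Set.Ioo (u j) (v j) = ∅) →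
      ∑ j, φ j.1 |f (v j) - f (u j)| ≤ V) :
    (∀ x ∈ Set.Ico a b, ∃ L : ℝ,
      Tendsto f (nhdsWithin x (Set.Ioo x b)) (nhds L)) ∧
    (∀ x ∈ Set.Ioc a b, ∃ L : ℝ,
      Tendsto f (nhdsWithin x (Set.Ioo a x)) (nhds L)) := by
  constructor
  · intro x hx
    exact PhiBV_core φ hmono hdivg a b f V hVf x hx
  · intro x hx
    -- reflect: g t = f (-t) on [-b, -a]
    have hVg : ∀ (s : ℕ) (u v : Fin s → ℝ),
        (∀ j, -b ≤ u j ∧ u j < v j ∧ v j ≤ -a) →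
        (∀ i j, i ≠ j → Set.Ioo (u i) (v i) ∩ Set.Ioo (u j) (v j) = ∅) →
        ∑ j, φ j.1 |(fun t => f (-t)) (v j) - (fun t => f (-t)) (u j)| ≤ V := by
      intro s u v hbd hdisj
      have := hVf s (fun j => -(v j)) (fun j => -(u j))
        (fun j => by
          have h := hbd j
          refine ⟨?_, ?_, ?_⟩ <;>
            [linarith [h.2.2]; linarith [h.2.1]; linarith [h.1]])
        (by
          intro i j hij
          have h := hdisj i j hij
          rw [Set.eq_empty_iff_forall_notMem] at h ⊢
          rintro y ⟨⟨hy1, hy2⟩, ⟨hy3, hy4⟩⟩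
          exact h (-y) ⟨⟨by linarith, by linarith⟩, ⟨by linarith, by linarith⟩⟩)
      simpa [abs_sub_comm] using this
    obtain ⟨L, hL⟩ := PhiBV_core φ hmono hdivg (-b) (-a) (fun t => f (-t)) V hVg (-x)
      ⟨by linarith [hx.2], by linarith [hx.1]⟩
    refine ⟨L, ?_⟩
    have hneg : Tendsto (fun t : ℝ => -t) (nhdsWithin x (Set.Ioo a x))
        (nhdsWithin (-x) (Set.Ioo (-x) (-a))) := by
      apply Tendsto.inf
      · exact (continuous_neg.tendsto x)
      · rw [tendsto_principal_principal]
        rintro y ⟨hy1, hy2⟩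
        exact ⟨by linarith, by linarith⟩
    have := hL.comp hneg
    convert this using 1
    ext t
    simp
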